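/- Every chordless graph is 2-degenerate. -/

import Mathlib

/-- Two edges are at distance at most one: they share a vertex or
an endpoint of one is adjacent to an endpoint of the other. -/
def edgeNear {V : Type} (G : SimpleGraph V) (e f : Sym2 V) : Prop :=
  ∃ a ∈ e, ∃ b ∈ f, a = b ∨ G.Adj a b

/-- A set of edges is an induced matching of `G`. -/
def IsInducedMatching {V : Type} (G : SimpleGraph V) (M : Set (Sym2 V)) : Prop :=
  M ⊆ G.edgeSet ∧
    ∀ e ∈ M, ∀ f ∈ M, e ≠ f → ∀ a ∈ e, ∀ b ∈ f, a ≠ b ∧ ¬ G.Adj a b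

/-- An edge coloring is strong if every color class is an induced matching. -/
def IsStrongEdgeColoring {V : Type} {α : Type} (G : SimpleGraph V) (c : Sym2 V → α) : Prop :=
  ∀ k : α, IsInducedMatching G {e | e ∈ G.edgeSet ∧ c e = k}

/-- The strong chromatic index: least number of colors in a strong edge coloring. -/
noncomputable def strongChromaticIndex {V : Type} (G : SimpleGraph V) : ℕ :=
  sInf {n : ℕ | ∃ c : Sym2 V → Fin n, IsStrongEdgeColoring G c}

/-- `G` is `k`-degenerate: every (induced) subgraph has a vertex of degree at most `k`. -/
def Degenerate {V : Type} (G : SimpleGraph V) (k : ℕ) : Prop :=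
  ∀ s : Set V, s.Nonempty → ∃ v ∈ s, (G.neighborSet v ∩ s).ncard ≤ k

/-- A vertex is nice: it has a neighbor of degree at most `k` and
at most `k` neighbors of degree strictly greater than `k`. -/
def IsNice {V : Type} (G : SimpleGraph V) (k : ℕ) (v : V) : Prop :=
  (∃ w, G.Adj v w ∧ (G.neighborSet w).ncard ≤ k) ∧
    {w | G.Adj v w ∧ k < (G.neighborSet w).ncard}.ncard ≤ k

/-- A graph is chordless if every cycle is induced: any edge joining two
vertices of a cycle is an edge of the cycle. -/
def Chordless {V : Type} (G : SimpleGraph V) : Prop :=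
  ∀ (v : V) (c : G.Walk v v), c.IsCycle →
    ∀ a ∈ c.support, ∀ b ∈ c.support, G.Adj a b → s(a, b) ∈ c.edges

/-- `G` has treewidth at most `k`, via tree decompositions. -/
def TreewidthAtMost {V : Type} (G : SimpleGraph V) (k : ℕ) : Prop :=
  ∃ (ι : Type) (T : SimpleGraph ι) (B : ι → Finset V),
    T.Connected ∧ T.IsAcyclic ∧
    (∀ v : V, ∃ i, v ∈ B i) ∧
    (∀ ⦃u v : V⦄, G.Adj u v → ∃ i, u ∈ B i ∧ v ∈ B i) ∧
    (∀ v : V, (T.induce {i | v ∈ B i}).Connected) ∧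
    (∀ i, (B i).card ≤ k + 1)

/-- `H` is a minor of `G`, via branch sets. -/
def IsMinor {W V : Type} (H : SimpleGraph W) (G : SimpleGraph V) : Prop :=
  ∃ φ : W → Set V,
    (∀ w, (φ w).Nonempty) ∧
    (Pairwise fun a b => Disjoint (φ a) (φ b)) ∧
    (∀ w, (G.induce (φ w)).Connected) ∧
    (∀ a b, H.Adj a b → ∃ x ∈ φ a, ∃ y ∈ φ b, G.Adj x y)

/-- A set of edges forming a matching (pairwise non-incident edges of `G`). -/
def IsMatchingSet {V : Type} (G : SimpleGraph V) (M : Set (Sym2 V)) : Prop :=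
  M ⊆ G.edgeSet ∧ ∀ e ∈ M, ∀ f ∈ M, e ≠ f → ∀ a ∈ e, a ∉ f

section Aux

open SimpleGraph Walk List

variable {V : Type} [DecidableEq V] {G : SimpleGraph V}

/-- In a path starting at `u`, an edge containing `u` goes to the vertex at index 1. -/
lemma edge_start_indexOf {u v x : V} (q : G.Walk u v) (hq : q.IsPath)
    (hx : s(u, x) ∈ q.edges) : q.support.idxOf x = 1 := by
  cases q with
  | nil => simp at hx
  | cons h q' =>
    rename_i b
    rw [Walk.edges_cons, List.mem_cons] at hx
    rcases hx with hx | hx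
    · rw [Sym2.eq_iff] at hx
      rcases hx with ⟨-, rfl⟩ | ⟨hub, rfl⟩
      · have hxb : x ≠ u := fun hxu => G.irrefl (hxu ▸ h)
        rw [Walk.support_cons, List.idxOf_cons_ne _ (Ne.symm hxb)]
        rw [q'.support_eq_cons, List.idxOf_cons_self]
      · exact absurd hub (G.ne_of_adj h)
    · exfalso
      have hu : u ∈ q'.support := Walk.fst_mem_support_of_mem_edges q' hx
      have := hq.support_nodup
      rw [Walk.support_cons, List.nodup_cons] at this
      exact this.1 hu

/-- Vertices at smaller index than `w` lie on the walk up until `w`. -/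
lemma mem_takeUntil_of_indexOf_le {u v w a : V} (p : G.Walk u v) (_hp : p.IsPath)
    (hw : w ∈ p.support) (_ha : a ∈ p.support)
    (h : p.support.idxOf a ≤ p.support.idxOf w) :
    a ∈ (p.takeUntil w hw).support := by
  by_contra hna
  have hspec := p.take_spec hw
  have hsupp : p.support = (p.takeUntil w hw).support ++ (p.dropUntil w hw).support.tail := by
    conv_lhs => rw [← hspec]
    rw [Walk.support_append]
  have hwmem : w ∈ (p.takeUntil w hw).support := Walk.end_mem_support _
  have hiw : p.support.idxOf w < (p.takeUntil w hw).support.length := by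
    rw [hsupp, List.idxOf_append_of_mem hwmem]
    exact List.idxOf_lt_length_iff.2 hwmem
  have hia : (p.takeUntil w hw).support.length ≤ p.support.idxOf a := by
    rw [hsupp, List.idxOf_append_of_notMem hna]
    exact Nat.le_add_right _ _
  omega

/-- If the index of a takeUntil-prefix member is computed in `p.support`, it agrees. -/
lemma indexOf_takeUntil_eq {u v w a : V} (p : G.Walk u v) (hw : w ∈ p.support)
    (ha : a ∈ (p.takeUntil w hw).support) :
    p.support.idxOf a = (p.takeUntil w hw).support.idxOf a := by
  have hspec := p.take_spec hw
  have hsupp : p.support = (p.takeUntil w hw).support ++ (p.dropUntil w hw).support.tail := by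
    conv_lhs => rw [← hspec]
    rw [Walk.support_append]
  rw [hsupp, List.idxOf_append_of_mem ha]

/-- Key lemma: a vertex `u` cannot have three neighbours on a path from `u`,
two of which come strictly before the third, in a chordless graph. -/
lemma chord_aux (hc : Chordless G) {u x w a b : V} (p : G.Walk u x) (hp : p.IsPath)
    (hw : w ∈ p.support) (ha : a ∈ p.support) (hb : b ∈ p.support)
    (hadjw : G.Adj u w) (hadja : G.Adj u a) (hadjb : G.Adj u b) (hab : a ≠ b)
    (hia : p.support.idxOf a < p.support.idxOf w)
    (hib : p.support.idxOf b < p.support.idxOf w) : False := by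
  set t := p.takeUntil w hw with htdef
  have ht : t.IsPath := hp.takeUntil hw
  have hat : a ∈ t.support := mem_takeUntil_of_indexOf_le p hp hw ha hia.le
  have hbt : b ∈ t.support := mem_takeUntil_of_indexOf_le p hp hw hb hib.le
  have hwt : w ∈ t.support := Walk.end_mem_support _
  -- the cycle
  have hnotedge : s(u, w) ∉ t.reverse.edges := by
    rw [Walk.edges_reverse, List.mem_reverse]
    intro hmem
    have h1 : t.support.idxOf w = 1 := edge_start_indexOf t ht hmem
    have h1' : p.support.idxOf w = 1 := by
      rw [indexOf_takeUntil_eq p hw hwt, ← htdef, h1]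
    -- then indexOf a < 1, so indexOf a = 0, so a = u, contradicting adjacency
    have : p.support.idxOf a = 0 := by omega
    have hau : a = u := by
      have := List.idxOf_inj ha (x := a) (y := u)
      apply this.1
      rw [‹p.support.idxOf a = 0›]
      rw [p.support_eq_cons, List.idxOf_cons_self]
    exact G.irrefl (hau ▸ hadja)
  have hcyc : (Walk.cons hadjw t.reverse).IsCycle := by
    rw [Walk.cons_isCycle_iff]
    exact ⟨ht.reverse, hnotedge⟩
  set c := Walk.cons hadjw t.reverse with hcdef
  have hsupc : ∀ y, y ∈ t.support → y ∈ c.support := by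
    intro y hy
    rw [hcdef, Walk.support_cons]
    exact List.mem_cons_of_mem _ (by rwa [Walk.support_reverse, List.mem_reverse])
  have humem : u ∈ c.support := Walk.start_mem_support c
  -- chord edges
  have key : ∀ y, y ∈ t.support → G.Adj u y → p.support.idxOf y < p.support.idxOf w →
      t.support.idxOf y = 1 := by
    intro y hy hadj hiy
    have hedge : s(u, y) ∈ c.edges := hc u c hcyc u humem y (hsupc y hy) hadj
    rw [hcdef, Walk.edges_cons, List.mem_cons] at hedge
    rcases hedge with hedge | hedge
    · rw [Sym2.eq_iff] at hedge
      obtain ⟨-, rfl⟩ | ⟨huw, -⟩ := hedge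
      · omega
      · exact absurd huw (G.ne_of_adj hadjw)
    · rw [Walk.edges_reverse, List.mem_reverse] at hedge
      exact edge_start_indexOf t ht hedge
  have hka := key a hat hadja hia
  have hkb := key b hbt hadjb hib
  exact hab ((List.idxOf_inj hat).1 (hka.trans hkb.symm))

end Aux

theorem stmt8 {V : Type} [Fintype V] (G : SimpleGraph V) (hc : Chordless G) :
    Degenerate G 2 := by
  classical
  intro s hs
  by_contra hcon
  push_neg at hcon
  have hdeg : ∀ v ∈ s, 3 ≤ (G.neighborSet v ∩ s).ncard := fun v hv => hcon v hv
  -- maximal path within s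
  set P : Set ℕ := {n | ∃ (u x : V) (p : G.Walk u x), p.IsPath ∧
    (∀ y ∈ p.support, y ∈ s) ∧ p.length = n} with hPdef
  obtain ⟨v, hv⟩ := hs
  have h0 : (0 : ℕ) ∈ P := ⟨v, v, SimpleGraph.Walk.nil,
    SimpleGraph.Walk.IsPath.nil, by simp [hv], rfl⟩
  have hbdd : BddAbove P := by
    refine ⟨Fintype.card V, fun n hn => ?_⟩
    obtain ⟨u, x, p, hp, -, rfl⟩ := hn
    exact hp.length_lt.le
  have hmem := Nat.sSup_mem ⟨0, h0⟩ hbdd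
  obtain ⟨u, x, p, hp, hps, hlen⟩ := hmem
  -- all neighbors of u in s lie on p
  have hnb : ∀ w, G.Adj u w → w ∈ s → w ∈ p.support := by
    intro w hw hws
    by_contra hns
    have hP : p.length + 1 ∈ P := by
      refine ⟨w, x, SimpleGraph.Walk.cons hw.symm p, hp.cons hns, ?_, by simp⟩
      intro y hy
      rw [SimpleGraph.Walk.support_cons, List.mem_cons] at hy
      rcases hy with rfl | hy
      · exact hws
      · exact hps y hy
    have := le_csSup hbdd hP
    omega
  -- three distinct neighbors of u in s
  have h3 : 3 ≤ (G.neighborSet u ∩ s).ncard :=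
    hdeg u (hps u p.start_mem_support)
  obtain ⟨t, hts, htc⟩ := Set.exists_subset_card_eq h3
  obtain ⟨w₁, w₂, w₃, h12, h13, h23, rfl⟩ := Set.ncard_eq_three.1 htc
  have hmem1 := hts (show w₁ ∈ ({w₁, w₂, w₃} : Set V) by simp)
  have hmem2 := hts (show w₂ ∈ ({w₁, w₂, w₃} : Set V) by simp)
  have hmem3 := hts (show w₃ ∈ ({w₁, w₂, w₃} : Set V) by simp)
  have hadj1 : G.Adj u w₁ := hmem1.1
  have hadj2 : G.Adj u w₂ := hmem2.1
  have hadj3 : G.Adj u w₃ := hmem3.1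
  have hp1 : w₁ ∈ p.support := hnb w₁ hadj1 hmem1.2
  have hp2 : w₂ ∈ p.support := hnb w₂ hadj2 hmem2.2
  have hp3 : w₃ ∈ p.support := hnb w₃ hadj3 hmem3.2
  set i₁ := p.support.idxOf w₁ with hi1
  set i₂ := p.support.idxOf w₂ with hi2
  set i₃ := p.support.idxOf w₃ with hi3
  have hne12 : i₁ ≠ i₂ := fun h => h12 ((List.idxOf_inj hp1).1 h)
  have hne13 : i₁ ≠ i₃ := fun h => h13 ((List.idxOf_inj hp1).1 h)
  have hne23 : i₂ ≠ i₃ := fun h => h23 ((List.idxOf_inj hp2).1 h)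
  rcases Nat.lt_trichotomy i₁ i₂ with h | h | h
  · rcases Nat.lt_trichotomy i₂ i₃ with h' | h' | h'
    · exact chord_aux hc p hp hp3 hp1 hp2 hadj3 hadj1 hadj2 h12 (h.trans h') h'
    · exact absurd h' hne23
    · rcases Nat.lt_trichotomy i₁ i₃ with h'' | h'' | h''
      · exact chord_aux hc p hp hp2 hp1 hp3 hadj2 hadj1 hadj3 h13 h h'
      · exact absurd h'' hne13
      · exact chord_aux hc p hp hp2 hp3 hp1 hadj2 hadj3 hadj1 (Ne.symm h13) h' h
  · exact absurd h hne12
  · rcases Nat.lt_trichotomy i₁ i₃ with h' | h' | h'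
    · exact chord_aux hc p hp hp3 hp2 hp1 hadj3 hadj2 hadj1 (Ne.symm h12) (h.trans h') h'
    · exact absurd h' hne13
    · rcases Nat.lt_trichotomy i₂ i₃ with h'' | h'' | h''
      · exact chord_aux hc p hp hp1 hp2 hp3 hadj1 hadj2 hadj3 h23 h h'
      · exact absurd h'' hne23
      · exact chord_aux hc p hp hp1 hp3 hp2 hadj1 hadj3 hadj2 (Ne.symm h23) h' h
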